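/- Let t be a nonnegative integer and n an integer with n ≥ max(16(t+1)^3, 40(t+2)). Then the set {θ ∈ [0, 2π) : cos θ ≠ 0 and Q_{n,t}(θ) = 0} is finite and has at most 2n−1 elements. -/

import Mathlib

open Polynomial Real

/-- `Q_{n,t}(θ) = 2cos(nθ) - 2cos((n-1)θ) + cos((2t+1)θ)/cos(θ)`. -/
noncomputable def Q (n t : ℕ) (θ : ℝ) : ℝ :=
  2 * Real.cos (n * θ) - 2 * Real.cos (((n : ℝ) - 1) * θ) +
    Real.cos ((2*(t : ℝ) + 1) * θ) / Real.cos θ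

namespace Stmt15Aux

/-- Real-rooted polynomials satisfy `p * p'' ≤ p'^2` pointwise. -/
lemma deriv_sq_ge (x a : ℝ) (s : Multiset ℝ) :
    ((Polynomial.C a * (s.map fun r => Polynomial.X - Polynomial.C r).prod).eval x) *
      ((derivative (derivative
        (Polynomial.C a * (s.map fun r => Polynomial.X - Polynomial.C r).prod))).eval x) ≤
    ((derivative (Polynomial.C a * (s.map fun r => Polynomial.X - Polynomial.C r).prod)).eval x)^2 := by
  induction s using Multiset.induction with
  | empty => simp
  | cons r s ih =>
    have hre : (Polynomial.C a * (((r ::ₘ s)).map fun r => X - Polynomial.C r).prod)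
        = (X - Polynomial.C r) * (Polynomial.C a * (s.map fun r => X - Polynomial.C r).prod) := by
      rw [Multiset.map_cons, Multiset.prod_cons]; ring
    set q := Polynomial.C a * (s.map fun r => X - Polynomial.C r).prod with hq
    rw [hre]
    have h1 : derivative ((X - Polynomial.C r) * q) = q + (X - Polynomial.C r) * derivative q := by
      simp [derivative_mul]
    have h2 : derivative (derivative ((X - Polynomial.C r) * q)) =
        2 * derivative q + (X - Polynomial.C r) * derivative (derivative q) := by
      rw [h1]; simp [derivative_mul]; ring
    rw [h2, h1]
    simp only [eval_add, eval_mul, eval_sub, eval_X, eval_C, eval_ofNat]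
    nlinarith [ih, sq_nonneg (q.eval x), sq_nonneg ((x - r) * (derivative q).eval x),
      sq_nonneg (x - r), mul_le_mul_of_nonneg_left ih (sq_nonneg (x - r))]

@[simp] lemma T_eval_one (m : ℤ) : (Chebyshev.T ℝ m).eval 1 = 1 := by
  have h := Polynomial.Chebyshev.T_real_cos 0 m
  simpa using h

lemma cheb_facts : ∀ k : ℕ, (Chebyshev.T ℝ (k : ℤ)).natDegree ≤ k ∧
    (derivative (Chebyshev.T ℝ (k : ℤ))).eval 1 = (k : ℝ)^2 ∧
    3 * (derivative (derivative (Chebyshev.T ℝ (k : ℤ)))).eval 1 = (k : ℝ)^2 * ((k : ℝ)^2 - 1) := by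
  intro k
  induction k using Nat.twoStepInduction with
  | zero => simp [Polynomial.Chebyshev.T_zero]
  | one => simp [Polynomial.Chebyshev.T_one]
  | more k ih ih1 =>
    obtain ⟨hd, h1, h2⟩ := ih
    obtain ⟨hd1, h11, h21⟩ := ih1
    have hrec : Chebyshev.T ℝ ((k + 2 : ℕ) : ℤ) =
        2 * X * Chebyshev.T ℝ ((k+1 : ℕ) : ℤ) - Chebyshev.T ℝ (k : ℤ) := by
      have h := Polynomial.Chebyshev.T_add_one ℝ ((k : ℤ) + 1)
      push_cast
      convert h using 2 <;> push_cast <;> ring_nf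
    refine ⟨?_, ?_, ?_⟩
    · rw [hrec]
      refine (natDegree_sub_le _ _).trans ?_
      have hX : (2 * X * Chebyshev.T ℝ ((k+1:ℕ):ℤ)).natDegree ≤ 2 + k := by
        refine natDegree_mul_le.trans ?_
        have : (2 * X : ℝ[X]).natDegree ≤ 1 := by compute_degree
        omega
      omega
    · have h := congrArg (fun p => (derivative p).eval 1) hrec
      simp only [derivative_mul, derivative_sub, derivative_X, derivative_ofNat,
        eval_add, eval_mul, eval_sub, eval_X, eval_ofNat, eval_one, mul_one, one_mul,
        T_eval_one] at h
      rw [h, h11, h1]; simp; push_cast; ring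
    · have h := congrArg (fun p => (derivative (derivative p)).eval 1) hrec
      simp only [derivative_mul, derivative_sub, derivative_add, derivative_X, derivative_ofNat,
        derivative_zero, eval_add, eval_mul, eval_sub, eval_X, eval_ofNat, eval_one, eval_zero,
        mul_one, one_mul, zero_mul, zero_add, add_zero, T_eval_one] at h
      rw [h11] at h
      rw [h]
      push_cast at h2 h21 ⊢
      linear_combination 2*h21 - h2

noncomputable def Dp (t : ℕ) : ℝ[X] := (Chebyshev.T ℝ ((2*t+1 : ℕ) : ℤ)).divX

noncomputable def Rp (n t : ℕ) : ℝ[X] :=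
  2 * Chebyshev.T ℝ (n : ℤ) - 2 * Chebyshev.T ℝ ((n : ℤ) - 1) + Dp t

lemma X_mul_Dp (t : ℕ) : X * Dp t = Chebyshev.T ℝ ((2*t+1 : ℕ) : ℤ) := by
  have h0 : (Chebyshev.T ℝ ((2*t+1 : ℕ) : ℤ)).coeff 0 = 0 := by
    rw [coeff_zero_eq_eval_zero]
    have h := Polynomial.Chebyshev.T_real_cos (π/2) ((2*t+1 : ℕ) : ℤ)
    rw [Real.cos_pi_div_two] at h
    rw [h]
    rw [Real.cos_eq_zero_iff]
    exact ⟨t, by push_cast; ring⟩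
  have := X_mul_divX_add (Chebyshev.T ℝ ((2*t+1 : ℕ) : ℤ))
  rw [h0, map_zero, add_zero] at this
  exact this

lemma Dp_eval_one (t : ℕ) : (Dp t).eval 1 = 1 := by
  have h := congrArg (fun p => p.eval 1) (X_mul_Dp t)
  simpa using h

lemma Dp_deriv_eval_one (t : ℕ) :
    (derivative (Dp t)).eval 1 = ((2*t+1 : ℕ) : ℝ)^2 - 1 := by
  have h := congrArg (fun p => (derivative p).eval 1) (X_mul_Dp t)
  simp only [derivative_mul, derivative_X, one_mul, eval_add, eval_mul, eval_X, eval_one,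
    (cheb_facts (2*t+1)).2.1, Dp_eval_one] at h
  linarith

lemma Dp_deriv2_eval_one (t : ℕ) :
    3 * (derivative (derivative (Dp t))).eval 1
      = (((2*t+1 : ℕ) : ℝ)^2 - 1) * (((2*t+1 : ℕ) : ℝ)^2 - 6) := by
  have h := congrArg (fun p => (derivative (derivative p)).eval 1) (X_mul_Dp t)
  simp only [derivative_mul, derivative_X, one_mul, derivative_add, eval_add, eval_mul, eval_X,
    eval_one, Dp_deriv_eval_one] at h
  have h2 := (cheb_facts (2*t+1)).2.2
  nlinarith [h, h2]

lemma Dp_natDegree_le (t : ℕ) : (Dp t).natDegree ≤ 2*t+1 :=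
  natDegree_divX_le.trans (cheb_facts (2*t+1)).1

lemma Q_eq_Rp (n t : ℕ) (θ : ℝ) (hc : Real.cos θ ≠ 0) :
    Q n t θ = (Rp n t).eval (Real.cos θ) := by
  have hD : Real.cos θ * (Dp t).eval (Real.cos θ) = Real.cos (((2*t+1 : ℕ) : ℝ) * θ) := by
    have h := congrArg (fun p => p.eval (Real.cos θ)) (X_mul_Dp t)
    simp only [eval_mul, eval_X, Polynomial.Chebyshev.T_real_cos] at h
    rw [h]
    norm_num
  have hDval : (Dp t).eval (Real.cos θ) = Real.cos (((2*t+1 : ℕ) : ℝ) * θ) / Real.cos θ := by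
    field_simp [hc] at hD ⊢
    linarith [hD]
  simp only [Rp, eval_add, eval_sub, eval_mul, eval_ofNat, Polynomial.Chebyshev.T_real_cos, hDval, Q]
  push_cast
  ring_nf

lemma Rp_natDegree_le (n t : ℕ) (h1 : 1 ≤ n) (ht : 2*t+1 ≤ n) : (Rp n t).natDegree ≤ n := by
  have hc : ((n : ℤ) - 1) = ((n - 1 : ℕ) : ℤ) := by omega
  refine (natDegree_add_le _ _).trans (max_le ((natDegree_sub_le _ _).trans (max_le ?_ ?_))
    ((Dp_natDegree_le t).trans ht))
  · refine natDegree_mul_le.trans ?_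
    have h2 : (2 : ℝ[X]).natDegree = 0 := natDegree_ofNat 2
    have := (cheb_facts n).1
    omega
  · refine natDegree_mul_le.trans ?_
    have h2 : (2 : ℝ[X]).natDegree = 0 := natDegree_ofNat 2
    have := (cheb_facts (n-1)).1
    rw [hc]
    omega

lemma Rp_eval_one (n t : ℕ) : (Rp n t).eval 1 = 1 := by
  simp [Rp, Dp_eval_one]

lemma Rp_deriv_eval_one (n t : ℕ) (h1 : 1 ≤ n) :
    (derivative (Rp n t)).eval 1 = 4*(n:ℝ) + ((2*t+1 : ℕ) : ℝ)^2 - 3 := by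
  have hc : ((n : ℤ) - 1) = ((n - 1 : ℕ) : ℤ) := by omega
  have hr : ((n - 1 : ℕ) : ℝ) = (n : ℝ) - 1 := by
    have : (1:ℕ) ≤ n := h1
    push_cast [this]
    ring
  simp only [Rp, derivative_add, derivative_sub, derivative_mul, derivative_ofNat, zero_mul,
    zero_add, eval_add, eval_sub, eval_mul, eval_ofNat, hc,
    (cheb_facts n).2.1, (cheb_facts (n-1)).2.1, Dp_deriv_eval_one, hr]
  ring

lemma Rp_deriv2_eval_one (n t : ℕ) (h1 : 1 ≤ n) :
    3 * (derivative (derivative (Rp n t))).eval 1 =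
      8*(n:ℝ)^3 - 12*(n:ℝ)^2 + 4*(n:ℝ)
        + (((2*t+1 : ℕ) : ℝ)^2 - 1) * (((2*t+1 : ℕ) : ℝ)^2 - 6) := by
  have hc : ((n : ℤ) - 1) = ((n - 1 : ℕ) : ℤ) := by omega
  have hr : ((n - 1 : ℕ) : ℝ) = (n : ℝ) - 1 := by
    have : (1:ℕ) ≤ n := h1
    push_cast [this]
    ring
  have e1 := (cheb_facts n).2.2
  have e2 := (cheb_facts (n-1)).2.2
  rw [hr] at e2
  have e3 := Dp_deriv2_eval_one t
  simp only [Rp, derivative_add, derivative_sub, derivative_mul, derivative_ofNat, zero_mul,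
    zero_add, eval_add, eval_sub, eval_mul, eval_ofNat, hc]
  nlinarith [e1, e2, e3]

lemma numeric_ineq (T N M : ℝ) (ht0 : 0 ≤ T) (hN : 16*(T+1)^3 ≤ N) (hN80 : 80 ≤ N)
    (hM : M = 2*T+1) :
    3*(4*N + M^2 - 3)^2 < 8*N^3 - 12*N^2 + 4*N + (M^2-1)*(M^2-6) := by
  set P : ℝ := T + 1 with hP
  have hP1 : 1 ≤ P := by simp [hP]; linarith
  have hP3 : 16*P^3 ≤ N := hN
  have hP2 : 16*P^2 ≤ N := by nlinarith
  have hPl : 16*P ≤ N := by nlinarith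
  have hN0 : (0:ℝ) < N := by linarith
  have hM2 : M^2 ≤ 4*P^2 := by rw [hM, hP]; nlinarith
  have k1a : N*M^2 ≤ N*(4*P^2) := mul_le_mul_of_nonneg_left hM2 hN0.le
  have k1b : N*(16*P^2) ≤ N*N := mul_le_mul_of_nonneg_left hP2 hN0.le
  have k1 : 24*N*M^2 ≤ 6*N^2 := by nlinarith
  have hM4 : M^4 ≤ 16*P^4 := by nlinarith [sq_nonneg M, sq_nonneg P, hM2]
  have hP4 : 256 * (P^3 * P) ≤ N * N := by
    have h3 : (16*P^3) * (16*P) ≤ N * N :=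
      mul_le_mul hP3 hPl (by positivity) hN0.le
    nlinarith [h3]
  have k2 : 2*M^4 ≤ N^2/8 := by nlinarith [hM4, hP4]
  have k3 : 640*N^2 ≤ 8*N^3 := by nlinarith
  have hM0 : 0 ≤ M^2 := sq_nonneg M
  nlinarith [k1, k2, k3, hM0, hN80, hN0, sq_nonneg N]

end Stmt15Aux

open Stmt15Aux in
theorem stmt_15 (t : ℕ) (n : ℕ) (hn : max (16*(t+1)^3) (40*(t+2)) ≤ n) :
    {θ : ℝ | θ ∈ Set.Ico 0 (2*Real.pi) ∧ Real.cos θ ≠ 0 ∧ Q n t θ = 0}.Finite ∧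
    {θ : ℝ | θ ∈ Set.Ico 0 (2*Real.pi) ∧ Real.cos θ ≠ 0 ∧ Q n t θ = 0}.ncard ≤ 2*n - 1 := by
  classical
  have hn1 : 16 * (t + 1)^3 ≤ n := le_trans (le_max_left _ _) hn
  have hn2 : 40 * (t + 2) ≤ n := le_trans (le_max_right _ _) hn
  have hn80 : 80 ≤ n := by omega
  have htp : t + 1 ≤ (t+1)^3 := Nat.le_self_pow (by norm_num) _
  have htn : 2*t + 1 ≤ n := by omega
  set R : ℝ[X] := Rp n t with hR
  have hR1 : R.eval 1 = 1 := Rp_eval_one n t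
  have hRne : R ≠ 0 := by
    intro h
    rw [h] at hR1
    simp at hR1
  -- the finset of relevant roots
  set F : Finset ℝ := R.roots.toFinset.filter (fun r => -1 < r ∧ r < 1) with hF
  -- cardinality bound on F
  have hFcard : F.card ≤ n - 1 := by
    by_contra hcon
    push_neg at hcon
    have h1 : n ≤ F.card := by omega
    have h2 : F.card ≤ R.roots.toFinset.card := Finset.card_filter_le _ _
    have h3 : R.roots.toFinset.card ≤ Multiset.card R.roots := R.roots.toFinset_card_le
    have h4 : Multiset.card R.roots ≤ R.natDegree := R.card_roots'
    have h5 : R.natDegree ≤ n := Rp_natDegree_le n t (by omega) htn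
    have hsp : R.Splits := splits_iff_card_roots.mpr (by omega)
    have hfact := hsp.eq_prod_roots
    have hkey := deriv_sq_ge 1 R.leadingCoeff R.roots
    rw [← hfact] at hkey
    rw [hR1, one_mul] at hkey
    rw [Rp_deriv_eval_one n t (by omega)] at hkey
    have h2d := Rp_deriv2_eval_one n t (by omega)
    -- numeric contradiction
    have hNcast : 16 * ((t:ℝ) + 1)^3 ≤ (n:ℝ) := by exact_mod_cast hn1
    have hN80 : (80 : ℝ) ≤ (n:ℝ) := by exact_mod_cast hn80
    have hMT : ((2*t+1 : ℕ) : ℝ) = 2*(t:ℝ) + 1 := by push_cast; ring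
    have hnum := numeric_ineq (t:ℝ) (n:ℝ) ((2*t+1 : ℕ) : ℝ)
      (Nat.cast_nonneg t) hNcast hN80 hMT
    nlinarith [hkey, h2d, hnum]
  -- the covering finset
  set S0 : Finset ℝ :=
    F.biUnion (fun r => ({Real.arccos r, 2*Real.pi - Real.arccos r} : Finset ℝ)) with hS0
  have hsub : {θ : ℝ | θ ∈ Set.Ico 0 (2*Real.pi) ∧ Real.cos θ ≠ 0 ∧ Q n t θ = 0} ⊆ ↑S0 := by
    rintro θ ⟨⟨h0, h2pi⟩, hc, hQ0⟩
    have hroot : R.eval (Real.cos θ) = 0 := by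
      rw [← Q_eq_Rp n t θ hc]
      exact hQ0
    have pi_pos := Real.pi_pos
    have hlt1 : Real.cos θ < 1 := by
      rcases lt_or_eq_of_le (Real.cos_le_one θ) with h | h
      · exact h
      · exfalso
        obtain ⟨k, hk⟩ := (Real.cos_eq_one_iff θ).mp h
        have hk0 : k = 0 := by
          have hb1 : (0:ℝ) ≤ (k:ℝ) := by nlinarith
          have hb2 : (k:ℝ) < 1 := by nlinarith
          have : (0:ℤ) ≤ k := by exact_mod_cast hb1
          have : k < 1 := by exact_mod_cast hb2
          omega
        rw [hk0] at hk
        simp at hk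
        rw [← hk] at hQ0
        norm_num [Q] at hQ0
    have hgtm1 : -1 < Real.cos θ := by
      rcases lt_or_eq_of_le (Real.neg_one_le_cos θ) with h | h
      · exact h
      · exfalso
        have hshift : Real.cos (θ - π) = 1 := by
          rw [Real.cos_sub]
          simp [← h]
        obtain ⟨k, hk⟩ := (Real.cos_eq_one_iff _).mp hshift
        have hk0 : k = 0 := by
          have hb1 : (-2:ℝ) < 2*(k:ℝ) := by nlinarith
          have hb2 : 2*(k:ℝ) < 1 := by nlinarith
          have h1 : (-2:ℤ) < 2*k := by exact_mod_cast hb1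
          have h2 : (2*k : ℤ) < 1 := by exact_mod_cast hb2
          omega
        rw [hk0] at hk
        simp at hk
        have hθπ : θ = π := by linarith
        rw [hθπ] at hQ0
        have c1 : Real.cos ((n:ℝ)*π) = (-1)^n := by
          have := Real.cos_nat_mul_pi_sub 0 n
          simpa using this
        have c2 : Real.cos (((n:ℝ)-1)*π) = -(-1)^n := by
          have := Real.cos_nat_mul_pi_sub π n
          rw [Real.cos_pi] at this
          rw [sub_mul, one_mul]
          rw [this]
          ring
        have c3 : Real.cos ((2*(t:ℝ)+1)*π) = -1 := by
          have := Real.cos_nat_mul_pi_sub 0 (2*t+1)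
          simp only [sub_zero, Real.cos_zero, mul_one] at this
          have hodd : Odd (2*t+1) := ⟨t, by ring⟩
          rw [hodd.neg_one_pow] at this
          rw [← this]
          congr 1
          push_cast
          ring
        simp only [Q, c1, c2, c3, Real.cos_pi] at hQ0
        rcases Nat.even_or_odd n with he | ho
        · rw [he.neg_one_pow] at hQ0
          norm_num at hQ0
        · rw [ho.neg_one_pow] at hQ0
          norm_num at hQ0
    have hmemF : Real.cos θ ∈ F := by
      rw [hF]
      refine Finset.mem_filter.mpr ⟨Multiset.mem_toFinset.mpr ?_, hgtm1, hlt1⟩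
      exact (Polynomial.mem_roots hRne).mpr hroot
    refine Finset.mem_coe.mpr (Finset.mem_biUnion.mpr ⟨Real.cos θ, hmemF, ?_⟩)
    by_cases hle : θ ≤ π
    · have : Real.arccos (Real.cos θ) = θ := Real.arccos_cos h0 hle
      simp [this]
    · push_neg at hle
      have h1 : 0 ≤ 2*π - θ := by linarith
      have h2 : 2*π - θ ≤ π := by linarith
      have : Real.arccos (Real.cos θ) = 2*π - θ := by
        rw [← Real.cos_two_pi_sub θ]
        exact Real.arccos_cos h1 h2
      simp [this]
  refine ⟨S0.finite_toSet.subset hsub, ?_⟩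
  have hcard1 : ({θ : ℝ | θ ∈ Set.Ico 0 (2*Real.pi) ∧ Real.cos θ ≠ 0 ∧ Q n t θ = 0}).ncard ≤ S0.card := by
    have := Set.ncard_le_ncard hsub S0.finite_toSet
    rwa [Set.ncard_coe_finset] at this
  have hcard2 : S0.card ≤ 2 * F.card := by
    refine (Finset.card_biUnion_le).trans ?_
    calc ∑ r ∈ F, ({Real.arccos r, 2*Real.pi - Real.arccos r} : Finset ℝ).card
        ≤ ∑ _r ∈ F, 2 := by
          refine Finset.sum_le_sum fun r _ => ?_
          exact (Finset.card_insert_le _ _).trans (by simp)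
      _ = 2 * F.card := by rw [Finset.sum_const, smul_eq_mul]; ring
  omega
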